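/- (Chentsov) Let u : ℕ → ℝ be a sequence with u_i ∈ [0,1) for all i. Then the following are equivalent: (1) for every s ≥ 1, the star discrepancy of the first N overlapping s-blocks (u_i, u_{i+1}, …, u_{i+s−1}), i = 0, …, N−1, tends to 0 as N → ∞ (i.e., u is completely uniformly distributed); (2) for every s ≥ 1, the star discrepancy of the first N non-overlapping s-blocks (u_{si}, u_{si+1}, …, u_{si+s−1}), i = 0, …, N−1, tends to 0 as N → ∞. -/

import Mathlib

open Filter Finset

noncomputable def starDisc (s N : ℕ) (v : ℕ → Fin s → ℝ) : ℝ :=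
  ⨆ t : Fin s → Set.Icc (0 : ℝ) 1,
    |(((Finset.range N).filter fun i => ∀ j, v i j < (t j : ℝ)).card : ℝ) / (N : ℝ) -
      ∏ j, (t j : ℝ)|

namespace Chentsov

lemma abs_term_le_one {s N : ℕ} (v : ℕ → Fin s → ℝ) (t : Fin s → Set.Icc (0 : ℝ) 1) :
    |(((Finset.range N).filter fun i => ∀ j, v i j < (t j : ℝ)).card : ℝ) / (N : ℝ) -
      ∏ j, (t j : ℝ)| ≤ 1 := by
  have h1 : (0:ℝ) ≤ (((Finset.range N).filter fun i => ∀ j, v i j < (t j : ℝ)).card : ℝ) / N :=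
    div_nonneg (by positivity) (by positivity)
  have h2 : (((Finset.range N).filter fun i => ∀ j, v i j < (t j : ℝ)).card : ℝ) / N ≤ 1 := by
    rcases Nat.eq_zero_or_pos N with h | h
    · simp [h]
    · rw [div_le_one (by exact_mod_cast h)]
      exact_mod_cast (Finset.card_filter_le _ _).trans (Finset.card_range N).le
  have h3 : (0:ℝ) ≤ ∏ j, (t j : ℝ) := Finset.prod_nonneg fun j _ => (t j).2.1
  have h4 : ∏ j, (t j : ℝ) ≤ 1 := Finset.prod_le_one (fun j _ => (t j).2.1) (fun j _ => (t j).2.2)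
  rw [abs_sub_le_iff]; constructor <;> linarith

lemma le_starDisc {s N : ℕ} (v : ℕ → Fin s → ℝ) (t : Fin s → Set.Icc (0 : ℝ) 1) :
    |(((Finset.range N).filter fun i => ∀ j, v i j < (t j : ℝ)).card : ℝ) / (N : ℝ) -
      ∏ j, (t j : ℝ)| ≤ starDisc s N v :=
  le_ciSup (f := fun t : Fin s → Set.Icc (0 : ℝ) 1 =>
      |(((Finset.range N).filter fun i => ∀ j, v i j < (t j : ℝ)).card : ℝ) / (N : ℝ) -
        ∏ j, (t j : ℝ)|)
    ⟨1, by rintro x ⟨t, rfl⟩; exact abs_term_le_one v t⟩ t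

lemma starDisc_le {s N : ℕ} {v : ℕ → Fin s → ℝ} {a : ℝ}
    (h : ∀ t : Fin s → Set.Icc (0 : ℝ) 1,
      |(((Finset.range N).filter fun i => ∀ j, v i j < (t j : ℝ)).card : ℝ) / (N : ℝ) -
        ∏ j, (t j : ℝ)| ≤ a) : starDisc s N v ≤ a := by
  have : Nonempty (Fin s → Set.Icc (0:ℝ) 1) := ⟨fun _ => ⟨0, by norm_num⟩⟩
  exact ciSup_le h

lemma starDisc_nonneg {s N : ℕ} (v : ℕ → Fin s → ℝ) : 0 ≤ starDisc s N v :=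
  (abs_nonneg _).trans (le_starDisc (N := N) v fun _ => ⟨0, by norm_num⟩)

lemma starDisc_le_one {s N : ℕ} (v : ℕ → Fin s → ℝ) : starDisc s N v ≤ 1 :=
  starDisc_le fun t => abs_term_le_one v t

/-- the count deviation bound, multiplied up. -/
lemma count_bound {s N : ℕ} (v : ℕ → Fin s → ℝ) (t : Fin s → Set.Icc (0 : ℝ) 1) :
    |(((Finset.range N).filter fun i => ∀ j, v i j < (t j : ℝ)).card : ℝ) -
      N * ∏ j, (t j : ℝ)| ≤ N * starDisc s N v := by
  rcases Nat.eq_zero_or_pos N with h | h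
  · simp [h]
  · have hN : (0:ℝ) < N := by exact_mod_cast h
    have := le_starDisc (N := N) v t
    rw [div_sub' hN.ne', abs_div, abs_of_pos hN, div_le_iff₀ hN] at this
    exact this.trans_eq (mul_comm _ _)



section
variable (u : ℕ → ℝ)

/-- indicator that the overlapping `s`-block at `i` lies in the box `t`. -/
noncomputable def f (s : ℕ) (t : Fin s → Set.Icc (0:ℝ) 1) (i : ℕ) : ℝ :=
  if ∀ j : Fin s, u (i + (j:ℕ)) < (t j : ℝ) then 1 else 0

variable {s : ℕ} {t : Fin s → Set.Icc (0:ℝ) 1}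

lemma f_nonneg (i : ℕ) : 0 ≤ f u s t i := by unfold f; split <;> norm_num

lemma f_le_one (i : ℕ) : f u s t i ≤ 1 := by unfold f; split <;> norm_num

lemma abs_f_sub_le (v : ℝ) (hv0 : 0 ≤ v) (hv1 : v ≤ 1) (i : ℕ) : |f u s t i - v| ≤ 1 := by
  have := f_nonneg u (s := s) (t := t) i; have := f_le_one u (s := s) (t := t) i
  rw [abs_sub_le_iff]; constructor <;> linarith

lemma sum_f (N : ℕ) : ∑ i ∈ Finset.range N, f u s t i
    = (((Finset.range N).filter fun i => ∀ j : Fin s, u (i + (j:ℕ)) < (t j : ℝ)).card : ℝ) := by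
  unfold f; rw [Finset.sum_boole]

/-- counting lemma for overlapping blocks. -/
lemma count_ov (N : ℕ) :
    |∑ i ∈ Finset.range N, f u s t i - N * ∏ j, (t j : ℝ)|
      ≤ N * starDisc s N (fun i j => u (i + (j:ℕ))) := by
  rw [sum_f]; exact count_bound _ t

/-- extension of the box `t` by ones. -/
def ext (s : ℕ) (t : Fin s → Set.Icc (0:ℝ) 1) (n : ℕ) : ℝ :=
  if h : n < s then ((t ⟨n, h⟩ : ℝ)) else 1

lemma ext_mem (n : ℕ) : ext s t n ∈ Set.Icc (0:ℝ) 1 := by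
  unfold ext; split
  · exact (t _).2
  · norm_num

lemma ext_coe (j : Fin s) : ext s t (j:ℕ) = (t j : ℝ) := by
  unfold ext; rw [dif_pos j.isLt]

lemma prod_range_ext : ∏ n ∈ Finset.range s, ext s t n = ∏ j, (t j : ℝ) := by
  rw [← Fin.prod_univ_eq_prod_range (fun n => ext s t n) s]
  exact Finset.prod_congr rfl fun j _ => ext_coe j

/-- the box in dimension `m` putting `t` at offset `r` and `1` elsewhere. -/
def pat1 (s : ℕ) (t : Fin s → Set.Icc (0:ℝ) 1) (r : ℕ) (n : ℕ) : ℝ :=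
  if r ≤ n ∧ n < r + s then ext s t (n - r) else 1

lemma pat1_mem (r n : ℕ) : pat1 s t r n ∈ Set.Icc (0:ℝ) 1 := by
  unfold pat1; split
  · exact ext_mem (s := s) (t := t) (n - r)
  · norm_num

lemma prod_pat1 {r m : ℕ} (h : r + s ≤ m) :
    ∏ n ∈ Finset.range m, pat1 s t r n = ∏ j, (t j : ℝ) := by
  have hm : m = r + (s + (m - r - s)) := by omega
  rw [hm, Finset.prod_range_add, Finset.prod_range_add]
  have h1 : ∏ n ∈ Finset.range r, pat1 s t r n = 1 := by
    apply Finset.prod_eq_one; intro n hn; rw [Finset.mem_range] at hn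
    unfold pat1; rw [if_neg (by omega)]
  have h2 : ∏ n ∈ Finset.range s, pat1 s t r (r + n) = ∏ j, (t j : ℝ) := by
    rw [← prod_range_ext]
    apply Finset.prod_congr rfl; intro n hn; rw [Finset.mem_range] at hn
    unfold pat1; rw [if_pos ⟨by omega, by omega⟩]; congr 1; omega
  have h3 : ∏ n ∈ Finset.range (m - r - s), pat1 s t r (r + (s + n)) = 1 := by
    apply Finset.prod_eq_one; intro n hn
    unfold pat1; rw [if_neg (by omega)]
  rw [h1, h2, h3, one_mul, mul_one]

lemma pat1_iff (hu : ∀ n, u n < 1) {r m : ℕ} (h : r + s ≤ m) (i : ℕ) :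
    (∀ j : Fin m, u (i + (j:ℕ)) < pat1 s t r (j:ℕ))
      ↔ (∀ j : Fin s, u (i + r + (j:ℕ)) < (t j : ℝ)) := by
  constructor
  · intro H j
    have hlt : r + (j:ℕ) < m := by omega
    have h1 := H ⟨r + (j:ℕ), hlt⟩
    simp only [Fin.val_mk] at h1
    have h2 : pat1 s t r (r + (j:ℕ)) = (t j : ℝ) := by
      unfold pat1; rw [if_pos ⟨by omega, by omega⟩]
      have : r + (j:ℕ) - r = (j:ℕ) := by omega
      rw [this, ext_coe]
    rw [h2] at h1
    have : i + (r + (j:ℕ)) = i + r + (j:ℕ) := by omega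
    rwa [this] at h1
  · intro H j
    by_cases hc : r ≤ (j:ℕ) ∧ (j:ℕ) < r + s
    · have hlt : (j:ℕ) - r < s := by omega
      have h1 := H ⟨(j:ℕ) - r, hlt⟩
      simp only [Fin.val_mk] at h1
      have h2 : pat1 s t r (j:ℕ) = (t ⟨(j:ℕ) - r, hlt⟩ : ℝ) := by
        unfold pat1; rw [if_pos hc]; unfold ext; rw [dif_pos hlt]
      have h3 : i + r + ((j:ℕ) - r) = i + (j:ℕ) := by omega
      rw [h3] at h1; rw [h2]; exact h1
    · unfold pat1; rw [if_neg hc]; exact hu _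

/-- counting lemma for one residue class, via non-overlapping `m`-blocks. -/
lemma count_res (hu : ∀ n, u n < 1) {r m : ℕ} (h : r + s ≤ m) (Q : ℕ) :
    |∑ q ∈ Finset.range Q, f u s t (m * q + r) - Q * ∏ j, (t j : ℝ)|
      ≤ Q * starDisc m Q (fun i j => u (m * i + (j:ℕ))) := by
  have key : ∑ q ∈ Finset.range Q, f u s t (m * q + r)
      = (((Finset.range Q).filter fun q => ∀ j : Fin m,
          u (m * q + (j:ℕ)) < ((fun n : Fin m => (⟨pat1 s t r n, pat1_mem _ _⟩ : Set.Icc (0:ℝ) 1)) j : ℝ)).card : ℝ) := by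
    unfold f
    rw [Finset.sum_boole]
    congr 1
    apply congrArg Finset.card
    apply Finset.filter_congr
    intro q _
    exact (pat1_iff u hu h (m * q)).symm
  rw [key]
  have hp : ∏ j : Fin m, ((fun n : Fin m => (⟨pat1 s t r n, pat1_mem _ _⟩ : Set.Icc (0:ℝ) 1)) j : ℝ)
      = ∏ j, (t j : ℝ) := by
    simp only
    rw [Fin.prod_univ_eq_prod_range (fun n => pat1 s t r n) m]
    exact prod_pat1 h
  rw [← hp]
  exact count_bound _ _


lemma sum_range_mul_decomp (g : ℕ → ℝ) (m Q : ℕ) :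
    ∑ i ∈ Finset.range (m * Q), g i
      = ∑ q ∈ Finset.range Q, ∑ r ∈ Finset.range m, g (m * q + r) := by
  induction Q with
  | zero => simp
  | succ Q ih => rw [Nat.mul_succ, Finset.sum_range_add, ih, Finset.sum_range_succ]

lemma reverse_bound (hu : ∀ n, u n < 1) (hs : 1 ≤ s) {m : ℕ} (hsm : s ≤ m)
    (N : ℕ) :
    |∑ i ∈ Finset.range N, f u s t i - N * ∏ j, (t j : ℝ)|
      ≤ (m:ℝ) * (N / m : ℕ) * starDisc m (N / m) (fun i j => u (m * i + (j:ℕ)))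
        + s * (N / m : ℕ) + 2 * m := by
  set Q := N / m with hQdef
  set D := starDisc m Q (fun i j => u (m * i + (j:ℕ))) with hDdef
  set v := ∏ j, (t j : ℝ) with hvdef
  have hm0 : 0 < m := lt_of_lt_of_le hs hsm
  have hv0 : 0 ≤ v := Finset.prod_nonneg fun j _ => (t j).2.1
  have hv1 : v ≤ 1 := Finset.prod_le_one (fun j _ => (t j).2.1) (fun j _ => (t j).2.2)
  have hD0 : 0 ≤ D := starDisc_nonneg _
  have hsplitN : N = m * Q + N % m := (Nat.div_add_mod N m).symm
  have hsplit : ∑ i ∈ Finset.range N, f u s t i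
      = (∑ r ∈ Finset.range m, ∑ q ∈ Finset.range Q, f u s t (m * q + r))
        + ∑ x ∈ Finset.range (N % m), f u s t (m * Q + x) := by
    nth_rewrite 1 [hsplitN]
    rw [Finset.sum_range_add, sum_range_mul_decomp, Finset.sum_comm]
  -- bound the tail
  have htail : |∑ x ∈ Finset.range (N % m), f u s t (m * Q + x)| ≤ m := by
    refine (Finset.abs_sum_le_sum_abs _ _).trans ?_
    calc ∑ x ∈ Finset.range (N % m), |f u s t (m * Q + x)|
        ≤ ∑ _x ∈ Finset.range (N % m), (1:ℝ) := by
          refine Finset.sum_le_sum fun x _ => ?_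
          rw [abs_of_nonneg (f_nonneg u _)]; exact f_le_one u _
      _ = (N % m : ℕ) := by simp
      _ ≤ m := by exact_mod_cast (Nat.mod_lt N hm0).le
  -- bound each residue class
  have hres : ∀ r ∈ Finset.range m,
      |∑ q ∈ Finset.range Q, f u s t (m * q + r) - Q * v|
        ≤ Q * D + (if r + s ≤ m then 0 else (Q:ℝ)) := by
    intro r hr
    by_cases hc : r + s ≤ m
    · rw [if_pos hc, add_zero]
      exact count_res u hu hc Q
    · rw [if_neg hc]
      have h1 : 0 ≤ ∑ q ∈ Finset.range Q, f u s t (m * q + r) :=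
        Finset.sum_nonneg fun q _ => f_nonneg u _
      have h2 : ∑ q ∈ Finset.range Q, f u s t (m * q + r) ≤ Q := by
        calc ∑ q ∈ Finset.range Q, f u s t (m * q + r)
            ≤ ∑ _q ∈ Finset.range Q, (1:ℝ) := Finset.sum_le_sum fun q _ => f_le_one u _
          _ = Q := by simp
      have h3 : 0 ≤ (Q:ℝ) * v := by positivity
      have h4 : (Q:ℝ) * v ≤ Q := by nlinarith [Nat.cast_nonneg (α := ℝ) Q]
      have h5 : 0 ≤ (Q:ℝ) * D := mul_nonneg (Nat.cast_nonneg _) hD0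
      rw [abs_sub_le_iff]
      constructor <;> linarith
  -- sum of the if-terms
  have hbad : ∑ r ∈ Finset.range m, (if r + s ≤ m then 0 else (Q:ℝ)) ≤ s * Q := by
    have : ∑ r ∈ Finset.range m, (if r + s ≤ m then 0 else (Q:ℝ))
        = ∑ r ∈ (Finset.range m).filter (fun r => ¬ (r + s ≤ m)), (Q:ℝ) := by
      rw [Finset.sum_filter]
      refine Finset.sum_congr rfl fun r _ => ?_
      by_cases hc : r + s ≤ m <;> simp [hc]
    rw [this, Finset.sum_const, nsmul_eq_mul]
    have hcard : ((Finset.range m).filter (fun r => ¬ (r + s ≤ m))).card ≤ s := by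
      have hsub : (Finset.range m).filter (fun r => ¬ (r + s ≤ m)) ⊆ Finset.Ico (m - s) m := by
        intro r hrm
        rw [Finset.mem_filter, Finset.mem_range] at hrm
        rw [Finset.mem_Ico]
        omega
      calc ((Finset.range m).filter (fun r => ¬ (r + s ≤ m))).card
          ≤ (Finset.Ico (m - s) m).card := Finset.card_le_card hsub
        _ = m - (m - s) := Nat.card_Ico _ _
        _ ≤ s := by omega
    have := Nat.cast_le (α := ℝ) |>.2 hcard
    nlinarith [Nat.cast_nonneg (α := ℝ) Q]
  -- combine
  have hmain : |(∑ r ∈ Finset.range m, ∑ q ∈ Finset.range Q, f u s t (m * q + r))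
      - (m:ℝ) * Q * v| ≤ m * Q * D + s * Q := by
    have : (m:ℝ) * Q * v = ∑ _r ∈ Finset.range m, (Q:ℝ) * v := by
      rw [Finset.sum_const, nsmul_eq_mul, Finset.card_range]; ring
    rw [this, ← Finset.sum_sub_distrib]
    refine (Finset.abs_sum_le_sum_abs _ _).trans ?_
    calc ∑ r ∈ Finset.range m, |∑ q ∈ Finset.range Q, f u s t (m * q + r) - Q * v|
        ≤ ∑ r ∈ Finset.range m, (Q * D + (if r + s ≤ m then 0 else (Q:ℝ))) :=
          Finset.sum_le_sum hres
      _ = m * (Q * D) + ∑ r ∈ Finset.range m, (if r + s ≤ m then 0 else (Q:ℝ)) := by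
          rw [Finset.sum_add_distrib, Finset.sum_const, nsmul_eq_mul, Finset.card_range]
      _ ≤ m * Q * D + s * Q := by rw [← mul_assoc]; linarith [hbad]
  have hNv : |(m:ℝ) * Q * v - N * v| ≤ m := by
    have h5 : (m:ℝ) * Q + (N % m : ℕ) = N := by exact_mod_cast hsplitN.symm
    have h6 : ((N % m : ℕ) : ℝ) ≤ m := by exact_mod_cast (Nat.mod_lt N hm0).le
    have h7 : ((N % m : ℕ) : ℝ) ≥ 0 := Nat.cast_nonneg _
    rw [← sub_mul, abs_mul]
    have : |(m:ℝ) * Q - N| = ((N % m : ℕ) : ℝ) := by rw [abs_sub_comm, abs_of_nonneg (by linarith)]; linarith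
    rw [this]
    calc ((N % m : ℕ) : ℝ) * |v| ≤ ((N % m : ℕ) : ℝ) * 1 := by
          rw [abs_of_nonneg hv0]; nlinarith
      _ ≤ m := by linarith
  calc |∑ i ∈ Finset.range N, f u s t i - N * v|
      = |((∑ r ∈ Finset.range m, ∑ q ∈ Finset.range Q, f u s t (m * q + r)) - m * Q * v)
          + (∑ x ∈ Finset.range (N % m), f u s t (m * Q + x))
          + ((m:ℝ) * Q * v - N * v)| := by rw [hsplit]; congr 1; ring
    _ ≤ |(∑ r ∈ Finset.range m, ∑ q ∈ Finset.range Q, f u s t (m * q + r)) - (m:ℝ) * Q * v|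
          + |∑ x ∈ Finset.range (N % m), f u s t (m * Q + x)|
          + |(m:ℝ) * Q * v - N * v| := by
        refine (abs_add_le _ _).trans ?_
        exact add_le_add (abs_add_le _ _) le_rfl
    _ ≤ (m * Q * D + s * Q) + m + m := by
        refine add_le_add (add_le_add hmain htail) hNv
    _ ≤ m * Q * D + s * Q + 2 * m := by linarith


end

lemma reverse_dir (u : ℕ → ℝ) (hu : ∀ i, 0 ≤ u i ∧ u i < 1)
    (h : ∀ s : ℕ, 1 ≤ s →
      Tendsto (fun N => starDisc s N fun i j => u (s * i + (j : ℕ))) atTop (nhds 0))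
    (s : ℕ) (hs : 1 ≤ s) :
    Tendsto (fun N => starDisc s N fun i j => u (i + (j : ℕ))) atTop (nhds 0) := by
  have hu1 : ∀ n, u n < 1 := fun n => (hu n).2
  rw [Metric.tendsto_atTop]
  intro ε hε
  obtain ⟨m, hm1, hm2⟩ : ∃ m : ℕ, s ≤ m ∧ (s:ℝ)/m ≤ ε/4 := by
    refine ⟨max s ⌈(4*s)/ε⌉₊, le_max_left _ _, ?_⟩
    have hmax1 : 1 ≤ max s ⌈(4*s)/ε⌉₊ := le_trans hs (le_max_left _ _)
    have hm0 : (0:ℝ) < ((max s ⌈(4*s)/ε⌉₊ : ℕ) : ℝ) := by exact_mod_cast hmax1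
    rw [div_le_div_iff₀ hm0 (by norm_num)]
    have h1 : ((4*s:ℕ):ℝ)/ε ≤ ((⌈((4*s:ℕ):ℝ)/ε⌉₊ : ℕ) : ℝ) := Nat.le_ceil _
    have h2 : ((⌈((4*s:ℕ):ℝ)/ε⌉₊:ℕ) : ℝ) ≤ ((max s ⌈((4*s:ℕ):ℝ)/ε⌉₊ : ℕ):ℝ) := by
      exact_mod_cast le_max_right s _
    have h3 := (div_le_iff₀ hε).1 (h1.trans h2)
    push_cast at h3 ⊢
    linarith
  have hm0 : 0 < m := lt_of_lt_of_le hs hm1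
  have hmR : (0:ℝ) < m := by exact_mod_cast hm0
  obtain ⟨Q₀, hQ₀⟩ := (Metric.tendsto_atTop.1 (h m (le_trans hs hm1))) (ε/4) (by linarith)
  refine ⟨max (m * (Q₀ + 1)) ⌈(8*(m:ℝ))/ε⌉₊, fun N hN => ?_⟩
  have hN1 : m * Q₀ ≤ N :=
    le_trans (Nat.mul_le_mul_left m (by omega)) (le_trans (le_max_left _ _) hN)
  have hNQ : Q₀ ≤ N / m := (Nat.le_div_iff_mul_le hm0).2 (by rw [Nat.mul_comm]; exact hN1)
  have hNpos : 0 < N := lt_of_lt_of_le (Nat.mul_pos hm0 (Nat.succ_pos _)) (le_trans (le_max_left _ _) hN)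
  have hNR : (0:ℝ) < N := by exact_mod_cast hNpos
  have hDlt : starDisc m (N/m) (fun i j => u (m * i + (j:ℕ))) < ε/4 := by
    have := hQ₀ (N/m) hNQ
    rwa [Real.dist_eq, sub_zero, abs_of_nonneg (starDisc_nonneg _)] at this
  have h2m : 2*(m:ℝ)/N ≤ ε/4 := by
    have h8 : (8*(m:ℝ))/ε ≤ (N:ℝ) := by
      refine (Nat.le_ceil _).trans ?_
      exact_mod_cast le_trans (le_max_right (m * (Q₀ + 1)) _) hN
    rw [div_le_div_iff₀ hNR (by norm_num)]
    have := (div_le_iff₀ hε).1 h8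
    linarith
  rw [Real.dist_eq, sub_zero, abs_of_nonneg (starDisc_nonneg _)]
  have hb : starDisc s N (fun i j => u (i + (j:ℕ)))
      ≤ starDisc m (N/m) (fun i j => u (m * i + (j:ℕ))) + (s:ℝ)/m + 2*(m:ℝ)/N := by
    apply starDisc_le
    intro t
    have h0 := reverse_bound u (s := s) (t := t) hu1 hs hm1 N
    set Q := N / m with hQdef
    set D := starDisc m Q (fun i j => u (m * i + (j:ℕ))) with hDdef
    set v := ∏ j, (t j : ℝ) with hvdef
    have hD0 : 0 ≤ D := starDisc_nonneg _
    rw [← sum_f u N]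
    have e1 : (∑ i ∈ Finset.range N, f u s t i) / N - v
        = ((∑ i ∈ Finset.range N, f u s t i) - N * v)/N := by field_simp
    rw [e1, abs_div, abs_of_pos hNR, div_le_iff₀ hNR]
    have hmQ : (m:ℝ) * Q ≤ N := by
      have : m * Q ≤ N := by rw [hQdef, Nat.mul_comm]; exact Nat.div_mul_le_self N m
      exact_mod_cast this
    have h1 : (m:ℝ) * Q * D ≤ N * D := mul_le_mul_of_nonneg_right hmQ hD0
    have h2 : (s:ℝ) * Q ≤ (s:ℝ)/m * N := by
      rw [div_mul_eq_mul_div, le_div_iff₀ hmR]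
      have hs0 : (0:ℝ) ≤ s := Nat.cast_nonneg _
      nlinarith
    have h3 : 2*(m:ℝ)/N*N = 2*m := div_mul_cancel₀ _ hNR.ne'
    have expand : (D + (s:ℝ)/m + 2*(m:ℝ)/N)*N = N * D + ((s:ℝ)/m)*N + 2*(m:ℝ) := by
      rw [add_mul, add_mul, h3]; ring_nf
    rw [expand]
    linarith
  calc starDisc s N (fun i j => u (i + (j:ℕ)))
      ≤ starDisc m (N/m) (fun i j => u (m * i + (j:ℕ))) + (s:ℝ)/m + 2*(m:ℝ)/N := hb
    _ < ε := by linarith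


section
variable (u : ℕ → ℝ) {s : ℕ} {t : Fin s → Set.Icc (0:ℝ) 1}

/-- the box in dimension `s*d+s` putting `t` at offsets `0` and `s*d`. -/
def pat2 (s : ℕ) (t : Fin s → Set.Icc (0:ℝ) 1) (d : ℕ) (n : ℕ) : ℝ :=
  if n < s then ext s t n else if n < s*d then 1 else ext s t (n - s*d)

lemma pat2_mem (d n : ℕ) : pat2 s t d n ∈ Set.Icc (0:ℝ) 1 := by
  unfold pat2; split
  · exact ext_mem (s := s) (t := t) n
  · split
    · norm_num
    · exact ext_mem (s := s) (t := t) (n - s*d)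

lemma prod_pat2 {d : ℕ} (hd : 1 ≤ d) :
    ∏ n ∈ Finset.range (s*d + s), pat2 s t d n = (∏ j, (t j : ℝ)) * ∏ j, (t j : ℝ) := by
  have hsd : s ≤ s * d := Nat.le_mul_of_pos_right s hd
  rw [Finset.prod_range_add]
  have h2 : ∏ x ∈ Finset.range s, pat2 s t d (s*d + x) = ∏ j, (t j : ℝ) := by
    rw [← prod_range_ext]
    refine Finset.prod_congr rfl fun x hx => ?_
    rw [Finset.mem_range] at hx
    unfold pat2
    rw [if_neg (by omega), if_neg (by omega)]
    congr 1; omega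
  have h1 : ∏ n ∈ Finset.range (s*d), pat2 s t d n = ∏ j, (t j : ℝ) := by
    have hsplit : s * d = s + (s*d - s) := by omega
    rw [hsplit, Finset.prod_range_add]
    have ha : ∏ n ∈ Finset.range s, pat2 s t d n = ∏ j, (t j : ℝ) := by
      rw [← prod_range_ext]
      refine Finset.prod_congr rfl fun x hx => ?_
      rw [Finset.mem_range] at hx
      unfold pat2; rw [if_pos hx]
    have hb : ∏ x ∈ Finset.range (s*d - s), pat2 s t d (s + x) = 1 := by
      refine Finset.prod_eq_one fun x hx => ?_
      rw [Finset.mem_range] at hx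
      unfold pat2; rw [if_neg (by omega), if_pos (by omega)]
    rw [ha, hb, mul_one]
  rw [h1, h2]

lemma pat2_iff (hu : ∀ n, u n < 1) {d : ℕ} (hd : 1 ≤ d) (i : ℕ) :
    (∀ j : Fin (s*d+s), u (i + (j:ℕ)) < pat2 s t d (j:ℕ))
      ↔ ((∀ j : Fin s, u (i + (j:ℕ)) < (t j : ℝ))
          ∧ (∀ j : Fin s, u ((i + s*d) + (j:ℕ)) < (t j : ℝ))) := by
  have hsd : s ≤ s * d := Nat.le_mul_of_pos_right s hd
  constructor
  · intro H
    constructor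
    · intro j
      have h1 := H ⟨(j:ℕ), by omega⟩
      simp only [Fin.val_mk] at h1
      have h2 : pat2 s t d (j:ℕ) = (t j : ℝ) := by
        unfold pat2; rw [if_pos j.isLt, ext_coe]
      rwa [h2] at h1
    · intro j
      have h1 := H ⟨s*d + (j:ℕ), by omega⟩
      simp only [Fin.val_mk] at h1
      have h2 : pat2 s t d (s*d + (j:ℕ)) = (t j : ℝ) := by
        unfold pat2; rw [if_neg (by omega), if_neg (by omega)]
        have h3 : s*d + (j:ℕ) - s*d = (j:ℕ) := by omega
        rw [h3, ext_coe]
      have h3 : i + (s*d + (j:ℕ)) = (i + s*d) + (j:ℕ) := by omega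
      rwa [h2, h3] at h1
  · rintro ⟨H1, H2⟩ j
    by_cases hc1 : (j:ℕ) < s
    · have h1 := H1 ⟨(j:ℕ), hc1⟩
      simp only [Fin.val_mk] at h1
      unfold pat2; rw [if_pos hc1]
      unfold ext; rw [dif_pos hc1]; exact h1
    · by_cases hc2 : (j:ℕ) < s*d
      · unfold pat2; rw [if_neg hc1, if_pos hc2]; exact hu _
      · have hlt : (j:ℕ) - s*d < s := by have := j.isLt; omega
        have h1 := H2 ⟨(j:ℕ) - s*d, hlt⟩
        simp only [Fin.val_mk] at h1
        have h3 : (i + s*d) + ((j:ℕ) - s*d) = i + (j:ℕ) := by omega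
        rw [h3] at h1
        unfold pat2; rw [if_neg hc1, if_neg hc2]
        unfold ext; rw [dif_pos hlt]; exact h1

lemma f_mul_f (d i : ℕ) :
    f u s t i * f u s t (i + s*d)
      = if (∀ j : Fin s, u (i + (j:ℕ)) < (t j : ℝ))
            ∧ (∀ j : Fin s, u ((i + s*d) + (j:ℕ)) < (t j : ℝ)) then (1:ℝ) else 0 := by
  unfold f
  by_cases h1 : ∀ j : Fin s, u (i + (j:ℕ)) < (t j : ℝ) <;>
    by_cases h2 : ∀ j : Fin s, u ((i + s*d) + (j:ℕ)) < (t j : ℝ) <;>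
      simp [h1, h2]

/-- counting lemma for pairs of blocks at distance `s*d`. -/
lemma count_pair (hu : ∀ n, u n < 1) {d : ℕ} (hd : 1 ≤ d) (N : ℕ) :
    |∑ i ∈ Finset.range N, f u s t i * f u s t (i + s*d)
        - N * ((∏ j, (t j : ℝ)) * ∏ j, (t j : ℝ))|
      ≤ N * starDisc (s*d+s) N (fun i j => u (i + (j:ℕ))) := by
  have key : ∑ i ∈ Finset.range N, f u s t i * f u s t (i + s*d)
      = (((Finset.range N).filter fun i => ∀ j : Fin (s*d+s),
          u (i + (j:ℕ)) < ((fun n : Fin (s*d+s) => (⟨pat2 s t d n, pat2_mem _ _⟩ : Set.Icc (0:ℝ) 1)) j : ℝ)).card : ℝ) := by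
    rw [Finset.sum_congr rfl fun i _ => f_mul_f u d i, Finset.sum_boole]
    congr 1
    apply congrArg Finset.card
    apply Finset.filter_congr
    intro i _
    exact (pat2_iff u hu hd i).symm
  rw [key]
  have hp : ∏ j : Fin (s*d+s), ((fun n : Fin (s*d+s) => (⟨pat2 s t d n, pat2_mem _ _⟩ : Set.Icc (0:ℝ) 1)) j : ℝ)
      = (∏ j, (t j : ℝ)) * ∏ j, (t j : ℝ) := by
    simp only
    rw [Fin.prod_univ_eq_prod_range (fun n => pat2 s t d n) (s*d+s)]
    exact prod_pat2 hd
  rw [← hp]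
  exact count_bound _ _

end


section
variable (u : ℕ → ℝ) {s : ℕ} {t : Fin s → Set.Icc (0:ℝ) 1}

lemma crude_bound (F : ℕ → ℝ) (hF : ∀ i, 0 ≤ F i ∧ F i ≤ 1) (c : ℕ) (w : ℝ)
    (hw0 : 0 ≤ w) (hw1 : w ≤ 1) : |∑ i ∈ Finset.range c, F i - c * w| ≤ c := by
  have h1 : 0 ≤ ∑ i ∈ Finset.range c, F i := Finset.sum_nonneg fun i _ => (hF i).1
  have h2 : ∑ i ∈ Finset.range c, F i ≤ c := by
    calc ∑ i ∈ Finset.range c, F i ≤ ∑ _i ∈ Finset.range c, (1:ℝ) :=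
        Finset.sum_le_sum fun i _ => (hF i).2
      _ = c := by simp
  have h3 : 0 ≤ (c:ℝ) * w := by positivity
  have h4 : (c:ℝ) * w ≤ c := by nlinarith [Nat.cast_nonneg (α := ℝ) c]
  rw [abs_sub_le_iff]; constructor <;> linarith

lemma shift_bound (c N : ℕ) :
    |∑ i ∈ Finset.range N, f u s t (c + i) - N * ∏ j, (t j : ℝ)|
      ≤ (c+N) * starDisc s (c+N) (fun i j => u (i + (j:ℕ))) + c := by
  set v := ∏ j, (t j : ℝ) with hv
  have hv0 : 0 ≤ v := Finset.prod_nonneg fun j _ => (t j).2.1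
  have hv1 : v ≤ 1 := Finset.prod_le_one (fun j _ => (t j).2.1) (fun j _ => (t j).2.2)
  have h3 : ∑ i ∈ Finset.range (c+N), f u s t i
      = (∑ i ∈ Finset.range c, f u s t i) + ∑ i ∈ Finset.range N, f u s t (c + i) :=
    Finset.sum_range_add _ c N
  have h1 := count_ov u (s := s) (t := t) (c+N)
  have h2 := crude_bound (f u s t) (fun i => ⟨f_nonneg u i, f_le_one u i⟩) c v hv0 hv1
  have e : ∑ i ∈ Finset.range N, f u s t (c + i) - N * v
      = (∑ i ∈ Finset.range (c+N), f u s t i - ((c+N:ℕ):ℝ) * v)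
        - ((∑ i ∈ Finset.range c, f u s t i) - c * v) := by
    rw [h3]; push_cast; ring
  rw [e]
  calc |_ - _| ≤ |∑ i ∈ Finset.range (c+N), f u s t i - ((c+N:ℕ):ℝ) * v|
        + |(∑ i ∈ Finset.range c, f u s t i) - c * v| := abs_sub _ _
    _ ≤ (c+N) * starDisc s (c+N) (fun i j => u (i + (j:ℕ))) + c := by
        push_cast at h1 ⊢; linarith

lemma shift_pair_bound (hu : ∀ n, u n < 1) {d : ℕ} (hd : 1 ≤ d) (c N : ℕ) :
    |∑ i ∈ Finset.range N, f u s t (c + i) * f u s t ((c + i) + s*d)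
        - N * ((∏ j, (t j : ℝ)) * ∏ j, (t j : ℝ))|
      ≤ (c+N) * starDisc (s*d+s) (c+N) (fun i j => u (i + (j:ℕ))) + c := by
  set v := ∏ j, (t j : ℝ) with hv
  have hv0 : 0 ≤ v := Finset.prod_nonneg fun j _ => (t j).2.1
  have hv1 : v ≤ 1 := Finset.prod_le_one (fun j _ => (t j).2.1) (fun j _ => (t j).2.2)
  have h3 : ∑ i ∈ Finset.range (c+N), f u s t i * f u s t (i + s*d)
      = (∑ i ∈ Finset.range c, f u s t i * f u s t (i + s*d))
        + ∑ i ∈ Finset.range N, f u s t (c + i) * f u s t ((c + i) + s*d) :=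
    Finset.sum_range_add _ c N
  have h1 := count_pair u (s := s) (t := t) hu hd (c+N)
  have h2 := crude_bound (fun i => f u s t i * f u s t (i + s*d))
    (fun i => ⟨mul_nonneg (f_nonneg u i) (f_nonneg u _),
      mul_le_one₀ (f_le_one u i) (f_nonneg u _) (f_le_one u _)⟩) c (v*v)
    (by nlinarith) (by nlinarith)
  have e : ∑ i ∈ Finset.range N, f u s t (c + i) * f u s t ((c + i) + s*d) - N * (v*v)
      = (∑ i ∈ Finset.range (c+N), f u s t i * f u s t (i + s*d) - ((c+N:ℕ):ℝ) * (v*v))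
        - ((∑ i ∈ Finset.range c, f u s t i * f u s t (i + s*d)) - c * (v*v)) := by
    rw [h3]; push_cast; ring
  rw [e]
  calc |_ - _| ≤ |∑ i ∈ Finset.range (c+N), f u s t i * f u s t (i + s*d) - ((c+N:ℕ):ℝ) * (v*v)|
        + |(∑ i ∈ Finset.range c, f u s t i * f u s t (i + s*d)) - c * (v*v)| := abs_sub _ _
    _ ≤ (c+N) * starDisc (s*d+s) (c+N) (fun i j => u (i + (j:ℕ))) + c := by
        push_cast at h1 ⊢; linarith

lemma g_sq (v : ℝ) (i : ℕ) :
    (f u s t i - v)^2 = (1 - 2*v) * f u s t i + v^2 := by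
  unfold f; split <;> ring

end


section
variable (u : ℕ → ℝ) {s : ℕ} {t : Fin s → Set.Icc (0:ℝ) 1}

set_option maxHeartbeats 2000000 in
lemma corr_bound (hu : ∀ n, u n < 1) (hs : 1 ≤ s) {H Q : ℕ} (hH : 1 ≤ H)
    {ε : ℝ} (hε0 : 0 ≤ ε)
    (hε : ∀ d, d < H → ∀ n, s*Q ≤ n →
      starDisc (s*d+s) n (fun i j => u (i + (j:ℕ))) ≤ ε) :
    ∑ i ∈ Finset.range (s*Q), (∑ k ∈ Finset.range H, (f u s t (i + s*k) - ∏ j, (t j : ℝ)))^2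
      ≤ H*((s:ℝ)*Q)/4 + 4*H^2*(((s:ℝ)*H + (s:ℝ)*Q)*ε + (s:ℝ)*H) := by
  set M := s*Q with hM
  set v := ∏ j, (t j : ℝ) with hv
  set X : ℝ := ((s:ℝ)*H + (s:ℝ)*Q)*ε + (s:ℝ)*H with hX
  have hv0 : 0 ≤ v := Finset.prod_nonneg fun j _ => (t j).2.1
  have hv1 : v ≤ 1 := Finset.prod_le_one (fun j _ => (t j).2.1) (fun j _ => (t j).2.2)
  have hs0 : (0:ℝ) ≤ s := Nat.cast_nonneg _
  have hH0 : (0:ℝ) ≤ H := Nat.cast_nonneg _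
  have hQ0 : (0:ℝ) ≤ Q := Nat.cast_nonneg _
  have hM0 : (0:ℝ) ≤ (M:ℝ) := Nat.cast_nonneg _
  have hX0 : 0 ≤ X := by
    rw [hX]; positivity
  -- the single-block estimate with shifted window
  have hsingle : ∀ k, k < H → |∑ i ∈ Finset.range M, f u s t (s*k + i) - M*v| ≤ X := by
    intro k hk
    have h0 := shift_bound u (s := s) (t := t) (s*k) M
    have hd0 : starDisc s (s*k+M) (fun i j => u (i + (j:ℕ))) ≤ ε := by
      have h1 := hε 0 (by omega) (s*k+M) (by omega)
      rwa [show s*0+s = s by omega] at h1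
    have hk' : ((s*k:ℕ):ℝ) ≤ (s:ℝ)*H := by
      push_cast
      have : (k:ℝ) ≤ H := by exact_mod_cast hk.le
      nlinarith
    have hD0 : 0 ≤ starDisc s (s*k+M) (fun i j => u (i + (j:ℕ))) := starDisc_nonneg _
    calc |∑ i ∈ Finset.range M, f u s t (s*k + i) - M*v|
        ≤ ((s*k+M:ℕ):ℝ) * starDisc s (s*k+M) (fun i j => u (i + (j:ℕ))) + (s*k:ℕ) := by
          push_cast at h0 ⊢; linarith
      _ ≤ ((s:ℝ)*H + (s:ℝ)*Q)*ε + (s:ℝ)*H := by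
          push_cast at hk' ⊢
          have hMQ : ((M:ℕ):ℝ) = (s:ℝ)*Q := by rw [hM]; push_cast; ring
          push_cast at hMQ
          nlinarith [mul_le_mul_of_nonneg_left hd0 (by positivity : (0:ℝ) ≤ ((s:ℝ)*(k:ℝ) + (s:ℝ)*(Q:ℝ)))]
      _ = X := by rw [hX]
  -- the pair estimate
  have hpair : ∀ k d, k < H → 1 ≤ d → d < H →
      |∑ i ∈ Finset.range M, f u s t (s*k + i) * f u s t ((s*k + i) + s*d) - M*(v*v)| ≤ X := by
    intro k d hk hd1 hdH
    have h0 := shift_pair_bound u (s := s) (t := t) hu hd1 (s*k) M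
    have hd0 : starDisc (s*d+s) (s*k+M) (fun i j => u (i + (j:ℕ))) ≤ ε :=
      hε d hdH (s*k+M) (by omega)
    have hD0 : 0 ≤ starDisc (s*d+s) (s*k+M) (fun i j => u (i + (j:ℕ))) := starDisc_nonneg _
    have hk' : (s:ℝ)*(k:ℝ) ≤ (s:ℝ)*H := by
      have : (k:ℝ) ≤ H := by exact_mod_cast hk.le
      nlinarith
    calc |∑ i ∈ Finset.range M, f u s t (s*k + i) * f u s t ((s*k + i) + s*d) - M*(v*v)|
        ≤ ((s*k+M:ℕ):ℝ) * starDisc (s*d+s) (s*k+M) (fun i j => u (i + (j:ℕ))) + (s*k:ℕ) := by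
          push_cast at h0 ⊢; linarith
      _ ≤ ((s:ℝ)*H + (s:ℝ)*Q)*ε + (s:ℝ)*H := by
          have hMQ : ((M:ℕ):ℝ) = (s:ℝ)*Q := by rw [hM]; push_cast; ring
          push_cast at hMQ ⊢
          nlinarith [mul_le_mul_of_nonneg_left hd0 (by positivity : (0:ℝ) ≤ ((s:ℝ)*(k:ℝ) + (s:ℝ)*(Q:ℝ)))]
      _ = X := by rw [hX]
  -- expansion of the square
  have expand : ∑ i ∈ Finset.range M, (∑ k ∈ Finset.range H, (f u s t (i + s*k) - v))^2
      = ∑ k ∈ Finset.range H, ∑ k' ∈ Finset.range H,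
          ∑ i ∈ Finset.range M, (f u s t (i + s*k) - v) * (f u s t (i + s*k') - v) := by
    have h1 : ∀ i, (∑ k ∈ Finset.range H, (f u s t (i + s*k) - v))^2
        = ∑ k ∈ Finset.range H, ∑ k' ∈ Finset.range H,
            (f u s t (i + s*k) - v) * (f u s t (i + s*k') - v) := by
      intro i; rw [sq, Finset.sum_mul_sum]
    rw [Finset.sum_congr rfl fun i _ => h1 i, Finset.sum_comm]
    exact Finset.sum_congr rfl fun k _ => Finset.sum_comm
  -- the off-diagonal helper, for k < k'
  have hoff : ∀ k k', k < k' → k' < H →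
      |∑ i ∈ Finset.range M, (f u s t (s*k + i) - v) * (f u s t (s*k' + i) - v)| ≤ 3*X := by
    intro k k' hkk hk'H
    set d := k' - k with hd
    have hd1 : 1 ≤ d := by omega
    have hdH : d < H := by omega
    have hidx : ∀ i, f u s t (s*k' + i) = f u s t ((s*k + i) + s*d) := by
      intro i; congr 1
      have : k' = k + d := by omega
      rw [this]; ring_nf
    have e : ∑ i ∈ Finset.range M, (f u s t (s*k + i) - v) * (f u s t (s*k' + i) - v)
        = (∑ i ∈ Finset.range M, f u s t (s*k + i) * f u s t ((s*k + i) + s*d))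
          - v * (∑ i ∈ Finset.range M, f u s t (s*k + i))
          - v * (∑ i ∈ Finset.range M, f u s t ((s*k + i) + s*d))
          + M * v^2 := by
      rw [Finset.sum_congr rfl fun i _ => show
          (f u s t (s*k + i) - v) * (f u s t (s*k' + i) - v)
            = f u s t (s*k + i) * f u s t ((s*k + i) + s*d)
              - v * f u s t (s*k + i) - v * f u s t ((s*k + i) + s*d) + v^2 by
        rw [hidx i]; ring]
      rw [Finset.sum_add_distrib, Finset.sum_sub_distrib, Finset.sum_sub_distrib,
        ← Finset.mul_sum, ← Finset.mul_sum, Finset.sum_const, Finset.card_range,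
        nsmul_eq_mul]
    have hF2 : ∑ i ∈ Finset.range M, f u s t ((s*k + i) + s*d)
        = ∑ i ∈ Finset.range M, f u s t (s*k' + i) :=
      Finset.sum_congr rfl fun i _ => (hidx i).symm
    have h1 := hpair k d (by omega) hd1 hdH
    have h2 := hsingle k (by omega)
    have h3 : |∑ i ∈ Finset.range M, f u s t ((s*k + i) + s*d) - M*v| ≤ X := by
      rw [hF2]; exact hsingle k' hk'H
    have e2 : ∑ i ∈ Finset.range M, (f u s t (s*k + i) - v) * (f u s t (s*k' + i) - v)
        = ((∑ i ∈ Finset.range M, f u s t (s*k + i) * f u s t ((s*k + i) + s*d)) - M*(v*v))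
          - v * ((∑ i ∈ Finset.range M, f u s t (s*k + i)) - M*v)
          - v * ((∑ i ∈ Finset.range M, f u s t ((s*k + i) + s*d)) - M*v) := by
      rw [e]; ring
    rw [e2]
    have hB : |v * ((∑ i ∈ Finset.range M, f u s t (s*k + i)) - M*v)| ≤ X := by
      rw [abs_mul, abs_of_nonneg hv0]
      nlinarith [abs_nonneg ((∑ i ∈ Finset.range M, f u s t (s*k + i)) - M*v)]
    have hC : |v * ((∑ i ∈ Finset.range M, f u s t ((s*k + i) + s*d)) - M*v)| ≤ X := by
      rw [abs_mul, abs_of_nonneg hv0]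
      nlinarith [abs_nonneg ((∑ i ∈ Finset.range M, f u s t ((s*k + i) + s*d)) - M*v)]
    calc |_ - _ - _|
        ≤ |((∑ i ∈ Finset.range M, f u s t (s*k + i) * f u s t ((s*k + i) + s*d)) - M*(v*v))
            - v * ((∑ i ∈ Finset.range M, f u s t (s*k + i)) - M*v)|
          + |v * ((∑ i ∈ Finset.range M, f u s t ((s*k + i) + s*d)) - M*v)| := abs_sub _ _
      _ ≤ |(∑ i ∈ Finset.range M, f u s t (s*k + i) * f u s t ((s*k + i) + s*d)) - M*(v*v)|
          + |v * ((∑ i ∈ Finset.range M, f u s t (s*k + i)) - M*v)|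
          + |v * ((∑ i ∈ Finset.range M, f u s t ((s*k + i) + s*d)) - M*v)| := by
            have := abs_sub ((∑ i ∈ Finset.range M, f u s t (s*k + i) * f u s t ((s*k + i) + s*d)) - M*(v*v))
              (v * ((∑ i ∈ Finset.range M, f u s t (s*k + i)) - M*v))
            linarith
      _ ≤ 3*X := by linarith
  -- termwise bound
  have hterm : ∀ k ∈ Finset.range H, ∀ k' ∈ Finset.range H,
      ∑ i ∈ Finset.range M, (f u s t (i + s*k) - v) * (f u s t (i + s*k') - v)
        ≤ (if k = k' then (M:ℝ)/4 else 0) + 3*X := by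
    intro k hk k' hk'
    rw [Finset.mem_range] at hk hk'
    have hsw : ∑ i ∈ Finset.range M, (f u s t (i + s*k) - v) * (f u s t (i + s*k') - v)
        = ∑ i ∈ Finset.range M, (f u s t (s*k + i) - v) * (f u s t (s*k' + i) - v) := by
      refine Finset.sum_congr rfl fun i _ => ?_
      rw [Nat.add_comm i (s*k), Nat.add_comm i (s*k')]
    rw [hsw]
    rcases lt_trichotomy k k' with h | h | h
    · rw [if_neg h.ne]
      have h1 := hoff k k' h hk'
      have h2 := le_abs_self (∑ i ∈ Finset.range M, (f u s t (s*k + i) - v) * (f u s t (s*k' + i) - v))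
      linarith
    · subst h
      rw [if_pos rfl]
      have hdiag : ∑ i ∈ Finset.range M, (f u s t (s*k + i) - v) * (f u s t (s*k + i) - v)
          = (1 - 2*v) * (∑ i ∈ Finset.range M, f u s t (s*k + i)) + M * v^2 := by
        rw [Finset.sum_congr rfl fun i _ => show
            (f u s t (s*k + i) - v) * (f u s t (s*k + i) - v)
              = (1 - 2*v) * f u s t (s*k + i) + v^2 by
          rw [← sq]; exact g_sq u v (s*k+i)]
        rw [Finset.sum_add_distrib, ← Finset.mul_sum, Finset.sum_const, Finset.card_range,
          nsmul_eq_mul]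
      have hδ := hsingle k hk
      have key : ∑ i ∈ Finset.range M, (f u s t (s*k + i) - v) * (f u s t (s*k + i) - v)
          = M*(v - v^2) + (1 - 2*v) * ((∑ i ∈ Finset.range M, f u s t (s*k + i)) - M*v) := by
        rw [hdiag]; ring
      rw [key]
      have hq : M*(v - v^2) ≤ (M:ℝ)/4 := by nlinarith [sq_nonneg (2*v - 1)]
      have habs : |(1 - 2*v) * ((∑ i ∈ Finset.range M, f u s t (s*k + i)) - M*v)| ≤ X := by
        rw [abs_mul]
        calc |1 - 2*v| * |(∑ i ∈ Finset.range M, f u s t (s*k + i)) - M*v|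
            ≤ 1 * X := by
              refine mul_le_mul ?_ hδ (abs_nonneg _) zero_le_one
              rw [abs_le]; constructor <;> linarith
          _ = X := one_mul X
      have := le_abs_self ((1 - 2*v) * ((∑ i ∈ Finset.range M, f u s t (s*k + i)) - M*v))
      linarith
    · rw [if_neg (ne_of_gt h)]
      have hsym : ∑ i ∈ Finset.range M, (f u s t (s*k + i) - v) * (f u s t (s*k' + i) - v)
          = ∑ i ∈ Finset.range M, (f u s t (s*k' + i) - v) * (f u s t (s*k + i) - v) :=
        Finset.sum_congr rfl fun i _ => mul_comm _ _
      rw [hsym]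
      have h1 := hoff k' k h hk
      have h2 := le_abs_self (∑ i ∈ Finset.range M, (f u s t (s*k' + i) - v) * (f u s t (s*k + i) - v))
      linarith
  -- sum everything
  rw [expand]
  have step1 : ∑ k ∈ Finset.range H, ∑ k' ∈ Finset.range H,
      ∑ i ∈ Finset.range M, (f u s t (i + s*k) - v) * (f u s t (i + s*k') - v)
      ≤ ∑ k ∈ Finset.range H, ∑ k' ∈ Finset.range H, ((if k = k' then (M:ℝ)/4 else 0) + 3*X) :=
    Finset.sum_le_sum fun k hk => Finset.sum_le_sum fun k' hk' => hterm k hk k' hk'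
  have step2 : ∑ k ∈ Finset.range H, ∑ k' ∈ Finset.range H, ((if k = k' then (M:ℝ)/4 else 0) + 3*X)
      = H * ((M:ℝ)/4) + H * (H * (3*X)) := by
    have inner : ∀ k ∈ Finset.range H,
        ∑ k' ∈ Finset.range H, ((if k = k' then (M:ℝ)/4 else 0) + 3*X)
          = (M:ℝ)/4 + H * (3*X) := by
      intro k hk
      rw [Finset.sum_add_distrib, Finset.sum_ite_eq (Finset.range H) k (fun _ => (M:ℝ)/4),
        if_pos hk, Finset.sum_const, Finset.card_range, nsmul_eq_mul]
    rw [Finset.sum_congr rfl inner, Finset.sum_add_distrib, Finset.sum_const,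
      Finset.card_range, nsmul_eq_mul, Finset.sum_const, Finset.card_range, nsmul_eq_mul]
  have hMQ : ((M:ℕ):ℝ) = (s:ℝ)*(Q:ℝ) := by rw [hM]; push_cast; ring
  calc ∑ k ∈ Finset.range H, ∑ k' ∈ Finset.range H,
      ∑ i ∈ Finset.range M, (f u s t (i + s*k) - v) * (f u s t (i + s*k') - v)
      ≤ ∑ k ∈ Finset.range H, ∑ k' ∈ Finset.range H, ((if k = k' then (M:ℝ)/4 else 0) + 3*X) := step1
    _ = H * ((M:ℝ)/4) + H * (H * (3*X)) := step2
    _ ≤ H*((s:ℝ)*Q)/4 + 4*H^2*X := by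
        have e1 : (H:ℝ) * ((M:ℝ)/4) = H*((s:ℝ)*Q)/4 := by rw [hMQ]; ring
        have e2 : (H:ℝ) * ((H:ℝ) * (3*X)) = 3*(H:ℝ)^2*X := by ring
        have e3 : 3*(H:ℝ)^2*X ≤ 4*(H:ℝ)^2*X := by nlinarith [sq_nonneg (H:ℝ)]
        rw [e1, e2]
        nlinarith [sq_nonneg (H:ℝ), hX0, mul_nonneg (sq_nonneg (H:ℝ)) hX0]


set_option maxHeartbeats 2000000 in
lemma forward_bound (hu : ∀ n, u n < 1) (hs : 1 ≤ s) {H Q : ℕ} (hH : 1 ≤ H) (hQ : 1 ≤ Q)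
    {ε : ℝ} (hε0 : 0 ≤ ε)
    (hε : ∀ d, d < H → ∀ n, s*Q ≤ n →
      starDisc (s*d+s) n (fun i j => u (i + (j:ℕ))) ≤ ε) :
    |∑ q ∈ Finset.range Q, f u s t (s*q) - Q * ∏ j, (t j : ℝ)|
      ≤ Q * Real.sqrt ((s:ℝ)/(4*H) + (4*(((s:ℝ)*H + (s:ℝ)*Q)*ε + (s:ℝ)*H))/Q) + 2*H := by
  set v := ∏ j, (t j : ℝ) with hv
  set X : ℝ := ((s:ℝ)*H + (s:ℝ)*Q)*ε + (s:ℝ)*H with hX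
  set W : ℝ := (s:ℝ)/(4*H) + (4*X)/Q with hW
  have hv0 : 0 ≤ v := Finset.prod_nonneg fun j _ => (t j).2.1
  have hv1 : v ≤ 1 := Finset.prod_le_one (fun j _ => (t j).2.1) (fun j _ => (t j).2.2)
  have hs0 : (0:ℝ) ≤ s := Nat.cast_nonneg _
  have hH1 : (1:ℝ) ≤ (H:ℝ) := by exact_mod_cast hH
  have hQ1 : (1:ℝ) ≤ (Q:ℝ) := by exact_mod_cast hQ
  have hH0 : (0:ℝ) < H := by linarith
  have hQ0 : (0:ℝ) < Q := by linarith
  have hX0 : 0 ≤ X := by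
    rw [hX]; positivity
  have hW0 : 0 ≤ W := by
    rw [hW]
    have := div_nonneg hs0 (by linarith : (0:ℝ) ≤ 4*H)
    have := div_nonneg (by linarith : (0:ℝ) ≤ 4*X) hQ0.le
    linarith
  -- the window sums
  set ψ : ℕ → ℝ := fun i => ∑ k ∈ Finset.range H, (f u s t (i + s*k) - v) with hψ
  set G : ℝ := ∑ q ∈ Finset.range Q, f u s t (s*q) - Q * v with hG
  have hGsum : G = ∑ q ∈ Finset.range Q, (f u s t (s*q) - v) := by
    rw [hG, Finset.sum_sub_distrib, Finset.sum_const, Finset.card_range, nsmul_eq_mul]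
  -- C1 : |∑_q ψ (s*q) - H * G| ≤ 2*H^2
  have habs1 : ∀ i, |f u s t i - v| ≤ 1 := abs_f_sub_le u v hv0 hv1
  have hC1 : |∑ q ∈ Finset.range Q, ψ (s*q) - H * G| ≤ 2*H^2 := by
    have hsw : ∑ q ∈ Finset.range Q, ψ (s*q)
        = ∑ k ∈ Finset.range H, ∑ q ∈ Finset.range Q, (f u s t (s*q + s*k) - v) := by
      rw [hψ]; exact Finset.sum_comm
    have hHG : H * G = ∑ _k ∈ Finset.range H, G := by
      rw [Finset.sum_const, Finset.card_range, nsmul_eq_mul]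
    have hinner : ∀ k, k < H →
        |∑ q ∈ Finset.range Q, (f u s t (s*q + s*k) - v) - G| ≤ 2*H := by
      intro k hk
      have e1 : ∑ q ∈ Finset.range (k + Q), (f u s t (s*q) - v)
          = (∑ q ∈ Finset.range k, (f u s t (s*q) - v))
            + ∑ q ∈ Finset.range Q, (f u s t (s*(k+q)) - v) :=
        Finset.sum_range_add _ k Q
      have e2 : ∑ q ∈ Finset.range (Q + k), (f u s t (s*q) - v)
          = (∑ q ∈ Finset.range Q, (f u s t (s*q) - v))
            + ∑ x ∈ Finset.range k, (f u s t (s*(Q+x)) - v) :=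
        Finset.sum_range_add _ Q k
      have e3 : ∑ q ∈ Finset.range (k + Q), (f u s t (s*q) - v)
          = ∑ q ∈ Finset.range (Q + k), (f u s t (s*q) - v) := by
        rw [Nat.add_comm k Q]
      have e4 : ∑ q ∈ Finset.range Q, (f u s t (s*q + s*k) - v)
          = ∑ q ∈ Finset.range Q, (f u s t (s*(k+q)) - v) := by
        refine Finset.sum_congr rfl fun q _ => ?_
        congr 2
        ring
      have hb1 : |∑ q ∈ Finset.range k, (f u s t (s*q) - v)| ≤ k := by
        refine (Finset.abs_sum_le_sum_abs _ _).trans ?_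
        calc ∑ q ∈ Finset.range k, |f u s t (s*q) - v|
            ≤ ∑ _q ∈ Finset.range k, (1:ℝ) := Finset.sum_le_sum fun q _ => habs1 _
          _ = k := by simp
      have hb2 : |∑ x ∈ Finset.range k, (f u s t (s*(Q+x)) - v)| ≤ k := by
        refine (Finset.abs_sum_le_sum_abs _ _).trans ?_
        calc ∑ x ∈ Finset.range k, |f u s t (s*(Q+x)) - v|
            ≤ ∑ _x ∈ Finset.range k, (1:ℝ) := Finset.sum_le_sum fun x _ => habs1 _
          _ = k := by simp
      have hkH : (k:ℝ) ≤ H := by exact_mod_cast hk.le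
      have e5 : ∑ q ∈ Finset.range Q, (f u s t (s*q + s*k) - v) - G
          = (∑ x ∈ Finset.range k, (f u s t (s*(Q+x)) - v))
            - ∑ q ∈ Finset.range k, (f u s t (s*q) - v) := by
        rw [e4, hGsum]
        have := e1.symm.trans (e3.trans e2)
        linarith
      rw [e5]
      calc |_ - _| ≤ |∑ x ∈ Finset.range k, (f u s t (s*(Q+x)) - v)|
            + |∑ q ∈ Finset.range k, (f u s t (s*q) - v)| := abs_sub _ _
        _ ≤ 2*H := by linarith
    rw [hsw, hHG, ← Finset.sum_sub_distrib]
    refine (Finset.abs_sum_le_sum_abs _ _).trans ?_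
    calc ∑ k ∈ Finset.range H, |∑ q ∈ Finset.range Q, (f u s t (s*q + s*k) - v) - G|
        ≤ ∑ k ∈ Finset.range H, 2*(H:ℝ) := Finset.sum_le_sum fun k hk =>
          hinner k (Finset.mem_range.1 hk)
      _ = H * (2*H) := by rw [Finset.sum_const, Finset.card_range, nsmul_eq_mul]
      _ = 2*H^2 := by ring
  -- C2 : Cauchy--Schwarz and embedding into the full window sum
  have hC2 : (∑ q ∈ Finset.range Q, ψ (s*q))^2
      ≤ Q * ∑ i ∈ Finset.range (s*Q), (ψ i)^2 := by
    have cs := Finset.sum_mul_sq_le_sq_mul_sq (Finset.range Q) (fun q => ψ (s*q)) (fun _ => (1:ℝ))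
    simp only [mul_one, one_pow, Finset.sum_const, Finset.card_range, nsmul_eq_mul] at cs
    have hsub : ∑ q ∈ Finset.range Q, (ψ (s*q))^2 ≤ ∑ i ∈ Finset.range (s*Q), (ψ i)^2 := by
      have himg : ∑ q ∈ Finset.range Q, (ψ (s*q))^2
          = ∑ i ∈ (Finset.range Q).image (fun q => s*q), (ψ i)^2 := by
        rw [Finset.sum_image]
        intro a _ b _ h
        exact Nat.eq_of_mul_eq_mul_left hs h
      rw [himg]
      refine Finset.sum_le_sum_of_subset_of_nonneg ?_ fun i _ _ => sq_nonneg _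
      intro i hi
      rw [Finset.mem_image] at hi
      obtain ⟨q, hq, rfl⟩ := hi
      rw [Finset.mem_range] at hq ⊢
      exact Nat.mul_lt_mul_left (by omega) |>.mpr hq
    nlinarith [sq_nonneg (∑ q ∈ Finset.range Q, ψ (s*q))]
  -- C3 : the correlation bound
  have hC3 : ∑ i ∈ Finset.range (s*Q), (ψ i)^2
      ≤ H*((s:ℝ)*Q)/4 + 4*H^2*X := corr_bound u hu hs hH hε0 hε
  -- C4 : assembling
  have hWeq : ((H:ℝ)*Q)^2 * W = Q*(H*((s:ℝ)*Q)/4 + 4*H^2*X) := by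
    rw [hW]; field_simp
  have hsq : (∑ q ∈ Finset.range Q, ψ (s*q))^2 ≤ ((H:ℝ)*Q)^2 * W := by
    rw [hWeq]
    calc (∑ q ∈ Finset.range Q, ψ (s*q))^2 ≤ Q * ∑ i ∈ Finset.range (s*Q), (ψ i)^2 := hC2
      _ ≤ Q*(H*((s:ℝ)*Q)/4 + 4*H^2*X) := by
          exact mul_le_mul_of_nonneg_left hC3 hQ0.le
  have habs2 : |∑ q ∈ Finset.range Q, ψ (s*q)| ≤ (H:ℝ)*Q * Real.sqrt W := by
    refine (Real.abs_le_sqrt hsq).trans ?_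
    rw [Real.sqrt_mul (sq_nonneg _) W, Real.sqrt_sq (by positivity : (0:ℝ) ≤ (H:ℝ)*Q)]
  have hHG2 : (H:ℝ) * |G| ≤ (H:ℝ)*Q * Real.sqrt W + 2*H^2 := by
    have h1 : |(H:ℝ) * G| ≤ |∑ q ∈ Finset.range Q, ψ (s*q)|
        + |∑ q ∈ Finset.range Q, ψ (s*q) - H * G| := by
      have := abs_sub (∑ q ∈ Finset.range Q, ψ (s*q))
        (∑ q ∈ Finset.range Q, ψ (s*q) - H * G)
      have e : ∑ q ∈ Finset.range Q, ψ (s*q)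
          - (∑ q ∈ Finset.range Q, ψ (s*q) - H * G) = (H:ℝ) * G := by ring
      rwa [e] at this
    rw [abs_mul, abs_of_pos hH0] at h1
    linarith
  have hfinal : |G| ≤ Q * Real.sqrt W + 2*H := by
    have h2 : (H:ℝ) * |G| ≤ (H:ℝ) * (Q * Real.sqrt W + 2*H) := by
      calc (H:ℝ) * |G| ≤ (H:ℝ)*Q * Real.sqrt W + 2*H^2 := hHG2
        _ = (H:ℝ) * (Q * Real.sqrt W + 2*H) := by ring
    exact le_of_mul_le_mul_left h2 hH0
  exact hfinal


lemma sum_f_nonover (Q : ℕ) : ∑ q ∈ Finset.range Q, f u s t (s*q)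
    = (((Finset.range Q).filter fun i => ∀ j : Fin s, u (s*i + (j:ℕ)) < (t j : ℝ)).card : ℝ) := by
  unfold f; rw [Finset.sum_boole]

end

lemma forward_dir (u : ℕ → ℝ) (hu : ∀ i, 0 ≤ u i ∧ u i < 1)
    (h : ∀ s : ℕ, 1 ≤ s →
      Tendsto (fun N => starDisc s N fun i j => u (i + (j : ℕ))) atTop (nhds 0))
    (s : ℕ) (hs : 1 ≤ s) :
    Tendsto (fun N => starDisc s N fun i j => u (s * i + (j : ℕ))) atTop (nhds 0) := by
  have hu1 : ∀ n, u n < 1 := fun n => (hu n).2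
  have hs0 : (0:ℝ) < s := by exact_mod_cast hs
  rw [Metric.tendsto_atTop]
  intro ε₀ hε₀
  set δ : ℝ := (ε₀/2)^2 with hδ
  have hδ0 : 0 < δ := by positivity
  obtain ⟨H, hH1, hHbig⟩ : ∃ H : ℕ, 1 ≤ H ∧ (s:ℝ)/(4*H) ≤ δ/4 := by
    refine ⟨max 1 ⌈(s:ℝ)/δ⌉₊, le_max_left _ _, ?_⟩
    have hH0 : (0:ℝ) < ((max 1 ⌈(s:ℝ)/δ⌉₊ : ℕ):ℝ) := by
      have : (1:ℕ) ≤ max 1 ⌈(s:ℝ)/δ⌉₊ := le_max_left _ _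
      exact_mod_cast lt_of_lt_of_le Nat.zero_lt_one this
    have h1 : (s:ℝ)/δ ≤ ((max 1 ⌈(s:ℝ)/δ⌉₊ : ℕ):ℝ) := by
      refine (Nat.le_ceil _).trans ?_
      exact_mod_cast le_max_right 1 ⌈(s:ℝ)/δ⌉₊
    rw [div_le_div_iff₀ (by linarith) (by norm_num)]
    have h2 := (div_le_iff₀ hδ0).1 h1
    nlinarith
  have hH0 : (0:ℝ) < H := by exact_mod_cast lt_of_lt_of_le Nat.zero_lt_one hH1
  set ε₁ : ℝ := δ/(16*(s:ℝ)) with hε₁def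
  have hε₁0 : 0 < ε₁ := by rw [hε₁def]; positivity
  have hdim : ∀ d : ℕ, ∃ N₀ : ℕ, ∀ n, N₀ ≤ n →
      starDisc (s*d+s) n (fun i j => u (i + (j:ℕ))) ≤ ε₁ := by
    intro d
    obtain ⟨N₀, hN₀⟩ := Metric.tendsto_atTop.1 (h (s*d+s) (by omega)) ε₁ hε₁0
    refine ⟨N₀, fun n hn => ?_⟩
    have h2 := hN₀ n hn
    rw [Real.dist_eq, sub_zero, abs_of_nonneg (starDisc_nonneg _)] at h2
    exact h2.le
  choose Nd hNd using hdim
  set N₀ := (Finset.range H).sup Nd with hN₀def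
  refine ⟨max (max N₀ 1) (max ⌈(16*(s:ℝ)*H*(ε₁+1))/δ⌉₊ ⌈8*(H:ℝ)/ε₀⌉₊), fun Q hQbig => ?_⟩
  have hQ1 : 1 ≤ Q := le_trans (le_trans (le_max_right N₀ 1) (le_max_left _ _)) hQbig
  have hQ0 : (0:ℝ) < Q := by exact_mod_cast lt_of_lt_of_le Nat.zero_lt_one hQ1
  have hQN₀ : N₀ ≤ Q := le_trans (le_trans (le_max_left N₀ 1) (le_max_left _ _)) hQbig
  have hQc : (16*(s:ℝ)*H*(ε₁+1))/δ ≤ Q := by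
    refine (Nat.le_ceil _).trans ?_
    exact_mod_cast le_trans (le_trans (le_max_left _ ⌈8*(H:ℝ)/ε₀⌉₊) (le_max_right (max N₀ 1) _)) hQbig
  have hQd : 8*(H:ℝ)/ε₀ ≤ Q := by
    refine (Nat.le_ceil _).trans ?_
    exact_mod_cast le_trans (le_trans (le_max_right ⌈(16*(s:ℝ)*H*(ε₁+1))/δ⌉₊ _) (le_max_right (max N₀ 1) _)) hQbig
  -- the uniform-in-t bound
  have hε : ∀ d, d < H → ∀ n, s*Q ≤ n →
      starDisc (s*d+s) n (fun i j => u (i + (j:ℕ))) ≤ ε₁ := by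
    intro d hd n hn
    refine hNd d n ?_
    have h1 : Nd d ≤ N₀ := Finset.le_sup (Finset.mem_range.2 hd)
    have h2 : Q ≤ s*Q := Nat.le_mul_of_pos_left Q (by omega)
    omega
  set W : ℝ := (s:ℝ)/(4*H) + (4*(((s:ℝ)*H + (s:ℝ)*Q)*ε₁ + (s:ℝ)*H))/Q with hW
  have hWδ : W ≤ δ := by
    have e1 : (4*(((s:ℝ)*H + (s:ℝ)*Q)*ε₁ + (s:ℝ)*H))/Q
        = (4*(s:ℝ)*H*(ε₁+1))/Q + 4*(s:ℝ)*ε₁ := by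
      field_simp
      ring
    have e2 : 4*(s:ℝ)*ε₁ = δ/4 := by
      rw [hε₁def]; field_simp; ring
    have e3 : (4*(s:ℝ)*H*(ε₁+1))/Q ≤ δ/4 := by
      rw [div_le_div_iff₀ hQ0 (by norm_num)]
      have h3 := (div_le_iff₀ hδ0).1 hQc
      nlinarith
    rw [hW, e1]
    linarith
  have hsqrtW : Real.sqrt W ≤ ε₀/2 := by
    calc Real.sqrt W ≤ Real.sqrt δ := Real.sqrt_le_sqrt hWδ
      _ = ε₀/2 := by rw [hδ, Real.sqrt_sq (by linarith)]
  have h2HQ : 2*(H:ℝ)/Q ≤ ε₀/4 := by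
    rw [div_le_div_iff₀ hQ0 (by norm_num)]
    have h3 := (div_le_iff₀ hε₀).1 hQd
    nlinarith
  rw [Real.dist_eq, sub_zero, abs_of_nonneg (starDisc_nonneg _)]
  have hb : starDisc s Q (fun i j => u (s * i + (j:ℕ))) ≤ ε₀/2 + ε₀/4 := by
    apply starDisc_le
    intro t
    have h0 := forward_bound u (s := s) (t := t) hu1 hs hH1 hQ1 hε₁0.le hε
    rw [← sum_f_nonover u Q]
    set v := ∏ j, (t j : ℝ) with hv
    have e1 : (∑ q ∈ Finset.range Q, f u s t (s*q)) / Q - v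
        = ((∑ q ∈ Finset.range Q, f u s t (s*q)) - Q * v)/Q := by
      field_simp
    rw [e1, abs_div, abs_of_pos hQ0, div_le_iff₀ hQ0]
    have e2 : (ε₀/2 + ε₀/4) * Q ≥ Q * Real.sqrt W + 2*H := by
      have h4 : Real.sqrt W * Q ≤ (ε₀/2) * Q := mul_le_mul_of_nonneg_right hsqrtW hQ0.le
      have h5 : 2*(H:ℝ) ≤ (ε₀/4) * Q := by
        have := (div_le_iff₀ hQ0).1 h2HQ
        linarith
      nlinarith
    calc |(∑ q ∈ Finset.range Q, f u s t (s*q)) - Q * v|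
        ≤ Q * Real.sqrt W + 2*H := h0
      _ ≤ (ε₀/2 + ε₀/4) * Q := e2
  calc starDisc s Q (fun i j => u (s * i + (j:ℕ))) ≤ ε₀/2 + ε₀/4 := hb
    _ < ε₀ := by linarith

end Chentsov

theorem chentsov (u : ℕ → ℝ) (hu : ∀ i, 0 ≤ u i ∧ u i < 1) :
    (∀ s : ℕ, 1 ≤ s →
      Tendsto (fun N => starDisc s N fun i j => u (i + (j : ℕ))) atTop (nhds 0)) ↔
    (∀ s : ℕ, 1 ≤ s →
      Tendsto (fun N => starDisc s N fun i j => u (s * i + (j : ℕ))) atTop (nhds 0)) := by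
  constructor
  · intro h s hs
    exact Chentsov.forward_dir u hu h s hs
  · intro h s hs
    exact Chentsov.reverse_dir u hu h s hs
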